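/- arXiv:1503.07158 — 3 statements merged into one kernel-verified Lean document; each statement's English description precedes it below -/
import Mathlib

section
/- Let Σ and Ψ be n×n positive semidefinite real matrices such that Σ ⪰ Ψ and Ψ⁺ ⪰ Σ⁺ (where X⁺ denotes the Moore–Penrose pseudoinverse). Then rank(Ψ) = rank(Σ). -/
open Matrix

/-- `B` is the Moore–Penrose pseudoinverse of `A`. -/
def IsMoorePenroseInv {n : ℕ} (A B : Matrix (Fin n) (Fin n) ℝ) : Prop :=
  A * B * A = A ∧ B * A * B = B ∧ (A * B)ᵀ = A * B ∧ (B * A)ᵀ = B * A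

/-- MP inverses are unique. -/
lemma mp_unique {n : ℕ} {A B C : Matrix (Fin n) (Fin n) ℝ}
    (hB : IsMoorePenroseInv A B) (hC : IsMoorePenroseInv A C) : B = C := by
  obtain ⟨hB1, hB2, hB3, hB4⟩ := hB
  obtain ⟨hC1, hC2, hC3, hC4⟩ := hC
  have h1 : B = B * A * C := by
    calc B = B * (A * B) := by rw [← Matrix.mul_assoc, hB2]
    _ = B * (A * B)ᵀ := by rw [hB3]
    _ = B * ((A * C * A) * B)ᵀ := by rw [hC1]
    _ = B * ((A * B)ᵀ * (A * C)ᵀ) := by rw [← transpose_mul]; noncomm_ring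
    _ = B * ((A * B) * (A * C)) := by rw [hB3, hC3]
    _ = (B * A * B) * (A * C) := by noncomm_ring
    _ = B * A * C := by rw [hB2]; noncomm_ring
  have h2 : C = B * A * C := by
    calc C = (C * A) * C := hC2.symm
    _ = (C * A)ᵀ * C := by rw [hC4]
    _ = (C * (A * B * A))ᵀ * C := by rw [hB1]
    _ = ((B * A)ᵀ * (C * A)ᵀ) * C := by rw [← transpose_mul]; noncomm_ring
    _ = (B * A) * ((C * A) * C) := by rw [hB4, hC4]; noncomm_ring
    _ = B * A * C := by rw [hC2]
  exact h1.trans h2.symm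

lemma mp_symm {n : ℕ} {A B : Matrix (Fin n) (Fin n) ℝ}
    (hA : Aᵀ = A) (hMP : IsMoorePenroseInv A B) : Bᵀ = B := by
  obtain ⟨h1, h2, h3, h4⟩ := hMP
  have key : IsMoorePenroseInv A Bᵀ := by
    refine ⟨?_, ?_, ?_, ?_⟩
    · have : A * Bᵀ * A = (A * B * A)ᵀ := by
        simp [transpose_mul, hA, Matrix.mul_assoc]
      rw [this, h1, hA]
    · have : Bᵀ * A * Bᵀ = (B * A * B)ᵀ := by
        simp [transpose_mul, hA, Matrix.mul_assoc]
      rw [this, h2]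
    · have e1 : A * Bᵀ = (B * A)ᵀ := by rw [transpose_mul, hA]
      rw [e1, transpose_transpose, h4]
    · have e1 : Bᵀ * A = (A * B)ᵀ := by rw [transpose_mul, hA]
      rw [e1, transpose_transpose, h3]
  exact mp_unique key ⟨h1, h2, h3, h4⟩

/-- The MP inverse of a PSD matrix is PSD. -/
lemma mp_posSemidef {n : ℕ} {A B : Matrix (Fin n) (Fin n) ℝ}
    (hA : A.PosSemidef) (hB : IsMoorePenroseInv A B) : B.PosSemidef := by
  have hAt : Aᵀ = A := IsSymm.eq (by simpa using hA.isHermitian)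
  have hBt : Bᵀ = B := mp_symm hAt hB
  have hEq : B = Bᵀ * A * B := by rw [hBt]; exact hB.2.1.symm
  rw [hEq]
  have := hA.conjTranspose_mul_mul_same (B := B)
  simpa using this

lemma mp_rank {n : ℕ} {A B : Matrix (Fin n) (Fin n) ℝ}
    (hB : IsMoorePenroseInv A B) : B.rank = A.rank := by
  apply le_antisymm
  · have h1 : B.rank = (B * A * B).rank := by rw [hB.2.1]
    rw [h1]
    exact le_trans (rank_mul_le_left (B * A) B) (rank_mul_le_right B A)
  · have h1 : A.rank = (A * B * A).rank := by rw [hB.1]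
    rw [h1]
    exact le_trans (rank_mul_le_left (A * B) A) (rank_mul_le_right A B)

/-- If `A ⪰ B ⪰ 0` then `rank B ≤ rank A`. -/
lemma rank_le_of_loewner {n : ℕ} {A B : Matrix (Fin n) (Fin n) ℝ}
    (hA : A.PosSemidef) (hB : B.PosSemidef) (h : (A - B).PosSemidef) :
    B.rank ≤ A.rank := by
  have hker : LinearMap.ker A.mulVecLin ≤ LinearMap.ker B.mulVecLin := by
    intro x hx
    rw [LinearMap.mem_ker, mulVecLin_apply] at hx ⊢
    rw [← hB.dotProduct_mulVec_zero_iff]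
    have h1 : 0 ≤ star x ⬝ᵥ B *ᵥ x := hB.dotProduct_mulVec_nonneg x
    have h2 : 0 ≤ star x ⬝ᵥ (A - B) *ᵥ x := h.dotProduct_mulVec_nonneg x
    rw [sub_mulVec, dotProduct_sub, hx, dotProduct_zero] at h2
    linarith [h2, h1]
  have hA' := LinearMap.finrank_range_add_finrank_ker A.mulVecLin
  have hB' := LinearMap.finrank_range_add_finrank_ker B.mulVecLin
  have hm : Module.finrank ℝ (LinearMap.ker A.mulVecLin) ≤
      Module.finrank ℝ (LinearMap.ker B.mulVecLin) := Submodule.finrank_mono hker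
  simp only [Matrix.rank]
  omega

/-- If `Σ ⪰ Ψ ⪰ 0` and `Ψ⁺ ⪰ Σ⁺`, then `rank Ψ = rank Σ`. -/
theorem stmt_0 {n : ℕ} (Sig Psi Sigp Psip : Matrix (Fin n) (Fin n) ℝ)
    (hSig : Sig.PosSemidef) (hPsi : Psi.PosSemidef)
    (hSigp : IsMoorePenroseInv Sig Sigp) (hPsip : IsMoorePenroseInv Psi Psip)
    (hge : (Sig - Psi).PosSemidef) (hgep : (Psip - Sigp).PosSemidef) :
    Psi.rank = Sig.rank := by
  have h1 : Psi.rank ≤ Sig.rank := rank_le_of_loewner hSig hPsi hge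
  have hSP : Sigp.PosSemidef := mp_posSemidef hSig hSigp
  have hPP : Psip.PosSemidef := mp_posSemidef hPsi hPsip
  have h2 : Sigp.rank ≤ Psip.rank := rank_le_of_loewner hPP hSP hgep
  rw [mp_rank hSigp, mp_rank hPsip] at h2
  exact le_antisymm h1 h2
end

section
/- Let Σ and Ψ be n×n positive semidefinite real matrices such that Σ ⪰ Ψ and Ψ⁺ ⪰ Σ⁺. Then the column space (image) of Σ equals the column space of Ψ, i.e., Im(Σ^{1/2}) = Im(Ψ^{1/2}). -/
set_option maxHeartbeats 1000000


open Matrix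

/-- The positive semidefinite square root of a positive semidefinite matrix -/
noncomputable def Matrix.PosSemidef.sqrt {n : Type*} [Fintype n] [DecidableEq n]
    {A : Matrix n n ℝ} (hA : A.PosSemidef) : Matrix n n ℝ :=
  (hA.1.eigenvectorUnitary : Matrix n n ℝ) * diagonal (Real.sqrt ∘ hA.1.eigenvalues) *
    (star hA.1.eigenvectorUnitary : Matrix n n ℝ)

lemma Matrix.PosSemidef.sqrt_mul_self {n : Type*} [Fintype n] [DecidableEq n]
    {A : Matrix n n ℝ} (hA : A.PosSemidef) : hA.sqrt * hA.sqrt = A := by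
  have hD : diagonal (Real.sqrt ∘ hA.1.eigenvalues) * diagonal (Real.sqrt ∘ hA.1.eigenvalues)
      = diagonal hA.1.eigenvalues := by
    rw [diagonal_mul_diagonal]
    congr 1
    funext i
    exact Real.mul_self_sqrt (hA.eigenvalues_nonneg i)
  have hsp := hA.1.spectral_theorem
  rw [Unitary.conjStarAlgAut_apply] at hsp
  simp only [RCLike.ofReal_real_eq_id, Function.id_comp] at hsp
  unfold Matrix.PosSemidef.sqrt
  have hU : (star hA.1.eigenvectorUnitary : Matrix n n ℝ) *
      (hA.1.eigenvectorUnitary : Matrix n n ℝ) = 1 := Unitary.coe_star_mul_self _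
  calc _ = (hA.1.eigenvectorUnitary : Matrix n n ℝ) *
        (diagonal (Real.sqrt ∘ hA.1.eigenvalues) *
          ((star hA.1.eigenvectorUnitary : Matrix n n ℝ) *
            (hA.1.eigenvectorUnitary : Matrix n n ℝ)) *
          diagonal (Real.sqrt ∘ hA.1.eigenvalues)) *
        (star hA.1.eigenvectorUnitary : Matrix n n ℝ) := by
          simp only [Matrix.mul_assoc]
    _ = A := by rw [hU, Matrix.mul_one, hD]; exact hsp.symm

lemma Matrix.PosSemidef.posSemidef_sqrt {n : Type*} [Fintype n] [DecidableEq n]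
    {A : Matrix n n ℝ} (hA : A.PosSemidef) : hA.sqrt.PosSemidef := by
  have hD : (diagonal (Real.sqrt ∘ hA.1.eigenvalues)).PosSemidef :=
    posSemidef_diagonal_iff.mpr fun i => Real.sqrt_nonneg _
  have := hD.mul_mul_conjTranspose_same (hA.1.eigenvectorUnitary : Matrix n n ℝ)
  unfold Matrix.PosSemidef.sqrt
  rwa [← star_eq_conjTranspose, ← Unitary.coe_star] at this

namespace MPAux

variable {n : ℕ}

lemma eq_of_mulVec_eq {M N : Matrix (Fin n) (Fin n) ℝ}
    (h : ∀ x, M *ᵥ x = N *ᵥ x) : M = N := by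
  ext i j
  have := congrFun (h (Pi.single j 1)) i
  simpa using this

lemma mp_symm {A B : Matrix (Fin n) (Fin n) ℝ} (h : IsMoorePenroseInv A B) :
    IsMoorePenroseInv B A :=
  ⟨h.2.1, h.1, h.2.2.2, h.2.2.1⟩

lemma mp_transpose {A B : Matrix (Fin n) (Fin n) ℝ} (h : IsMoorePenroseInv A B) :
    IsMoorePenroseInv Aᵀ Bᵀ := by
  obtain ⟨h1, h2, h3, h4⟩ := h
  refine ⟨?_, ?_, ?_, ?_⟩
  · rw [← transpose_mul, ← transpose_mul, ← mul_assoc, h1]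
  · rw [← transpose_mul, ← transpose_mul, ← mul_assoc, h2]
  · rw [← transpose_mul, transpose_transpose, h4]
  · rw [← transpose_mul, transpose_transpose, h3]

lemma mp_unique {A B C : Matrix (Fin n) (Fin n) ℝ}
    (hB : IsMoorePenroseInv A B) (hC : IsMoorePenroseInv A C) : B = C := by
  obtain ⟨hB1, hB2, hB3, hB4⟩ := hB
  obtain ⟨hC1, hC2, hC3, hC4⟩ := hC
  have hAB : A * B = A * C := by
    calc A * B = (A * B)ᵀ := hB3.symm
    _ = ((A * C * A) * B)ᵀ := by rw [hC1]
    _ = ((A * C) * (A * B))ᵀ := by rw [mul_assoc (A * C)]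
    _ = (A * B)ᵀ * (A * C)ᵀ := by rw [transpose_mul]
    _ = (A * B) * (A * C) := by rw [hB3, hC3]
    _ = A * C := by rw [← mul_assoc, hB1]
  have hBA : B * A = C * A := by
    calc B * A = (B * A)ᵀ := hB4.symm
    _ = (B * (A * C * A))ᵀ := by rw [hC1]
    _ = ((B * A) * (C * A))ᵀ := by
        rw [mul_assoc A C A, ← mul_assoc B A (C * A)]
    _ = (C * A)ᵀ * (B * A)ᵀ := by rw [transpose_mul]
    _ = (C * A) * (B * A) := by rw [hB4, hC4]
    _ = C * A := by rw [← mul_assoc, mul_assoc C A B, mul_assoc C (A * B) A, hB1]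
  calc B = B * A * B := hB2.symm
  _ = C := by rw [mul_assoc, hAB, ← mul_assoc, hBA, hC2]

lemma pinv_transpose_self {A B : Matrix (Fin n) (Fin n) ℝ}
    (hAs : Aᵀ = A) (h : IsMoorePenroseInv A B) : Bᵀ = B := by
  have h2 := mp_transpose h
  rw [hAs] at h2
  exact (mp_unique h2 h)

lemma pinv_posSemidef {A B : Matrix (Fin n) (Fin n) ℝ}
    (hA : A.PosSemidef) (h : IsMoorePenroseInv A B) : B.PosSemidef := by
  have hAs : Aᵀ = A := by
    have := hA.1
    rwa [IsHermitian, conjTranspose_eq_transpose_of_trivial] at this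
  have hBs : Bᵀ = B := pinv_transpose_self hAs h
  refine PosSemidef.of_dotProduct_mulVec_nonneg ?_ ?_
  · rwa [IsHermitian, conjTranspose_eq_transpose_of_trivial]
  · intro x
    have key : B *ᵥ x = B *ᵥ (A *ᵥ (B *ᵥ x)) := by
      rw [mulVec_mulVec, mulVec_mulVec, h.2.1]
    have hx := hA.dotProduct_mulVec_nonneg (B *ᵥ x)
    simp only [star_trivial] at hx ⊢
    calc (0:ℝ) ≤ (B *ᵥ x) ⬝ᵥ A *ᵥ (B *ᵥ x) := hx
    _ = x ⬝ᵥ B *ᵥ (A *ᵥ (B *ᵥ x)) := by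
        rw [dotProduct_mulVec x, ← mulVec_transpose, hBs]
    _ = x ⬝ᵥ B *ᵥ x := by rw [← key]

lemma ker_incl {A B : Matrix (Fin n) (Fin n) ℝ}
    (hB : B.PosSemidef) (hAB : (A - B).PosSemidef) :
    ∀ x, A *ᵥ x = 0 → B *ᵥ x = 0 := by
  intro x hx
  have h1 : (0:ℝ) ≤ star x ⬝ᵥ B *ᵥ x := hB.dotProduct_mulVec_nonneg x
  have h2 : (0:ℝ) ≤ star x ⬝ᵥ (A - B) *ᵥ x := hAB.dotProduct_mulVec_nonneg x
  rw [sub_mulVec, dotProduct_sub, hx, dotProduct_zero, zero_sub,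
    le_neg, neg_zero] at h2
  have : star x ⬝ᵥ B *ᵥ x = 0 := le_antisymm h2 h1
  exact (hB.dotProduct_mulVec_zero_iff x).mp this

lemma factor {A A' B : Matrix (Fin n) (Fin n) ℝ}
    (hk : ∀ x, A *ᵥ x = 0 → B *ᵥ x = 0) (h : A * A' * A = A) :
    B = B * A' * A := by
  apply eq_of_mulVec_eq
  intro x
  have hz : A *ᵥ (x - (A' * A) *ᵥ x) = 0 := by
    rw [mulVec_sub, mulVec_mulVec, ← mul_assoc, h, sub_self]
  have h2 := hk _ hz
  rw [mulVec_sub, sub_eq_zero] at h2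
  rw [h2, mulVec_mulVec, mul_assoc]

lemma range_le_of_factor {M N K : Matrix (Fin n) (Fin n) ℝ} (h : M = N * K) :
    LinearMap.range M.mulVecLin ≤ LinearMap.range N.mulVecLin := by
  rintro _ ⟨x, rfl⟩
  exact ⟨K *ᵥ x, by simp [h, mulVecLin_apply, mulVec_mulVec]⟩

/-- For a symmetric matrix with symmetric MP-inverse, ranges agree. -/
lemma range_pinv {A B : Matrix (Fin n) (Fin n) ℝ}
    (hAs : Aᵀ = A) (hBs : Bᵀ = B) (h : IsMoorePenroseInv A B) :
    LinearMap.range A.mulVecLin ≤ LinearMap.range B.mulVecLin := by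
  have hcomm : A * B = B * A := by
    calc A * B = (A * B)ᵀ := h.2.2.1.symm
    _ = Bᵀ * Aᵀ := transpose_mul _ _
    _ = B * A := by rw [hAs, hBs]
  have hf : A = B * (A * A) := by
    calc A = A * B * A := h.1.symm
    _ = B * A * A := by rw [hcomm]
    _ = B * (A * A) := mul_assoc _ _ _
  exact range_le_of_factor hf

end MPAux

open MPAux in
/-- If `Σ ⪰ Ψ ⪰ 0` and `Ψ⁺ ⪰ Σ⁺`, then `Im(Σ^{1/2}) = Im(Ψ^{1/2})`. -/
theorem stmt_1 {n : ℕ} (Sig Psi Sigp Psip : Matrix (Fin n) (Fin n) ℝ)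
    (hSig : Sig.PosSemidef) (hPsi : Psi.PosSemidef)
    (hSigp : IsMoorePenroseInv Sig Sigp) (hPsip : IsMoorePenroseInv Psi Psip)
    (hge : (Sig - Psi).PosSemidef) (hgep : (Psip - Sigp).PosSemidef) :
    LinearMap.range (hSig.sqrt.mulVecLin) = LinearMap.range (hPsi.sqrt.mulVecLin) := by
  -- transposes
  have hSs : Sigᵀ = Sig := by
    have := hSig.1; rwa [IsHermitian, conjTranspose_eq_transpose_of_trivial] at this
  have hPs : Psiᵀ = Psi := by
    have := hPsi.1; rwa [IsHermitian, conjTranspose_eq_transpose_of_trivial] at this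
  have hSps : Sigpᵀ = Sigp := pinv_transpose_self hSs hSigp
  have hPps : Psipᵀ = Psip := pinv_transpose_self hPs hPsip
  have hSigpPSD : Sigp.PosSemidef := pinv_posSemidef hSig hSigp
  -- range Psi ≤ range Sig
  have k1 : ∀ x, Sig *ᵥ x = 0 → Psi *ᵥ x = 0 := ker_incl hPsi hge
  have f1 : Psi = Psi * Sigp * Sig := factor k1 hSigp.1
  have f1' : Psi = Sig * (Sigp * Psi) := by
    calc Psi = Psiᵀ := hPs.symm
    _ = (Psi * Sigp * Sig)ᵀ := by rw [← f1]
    _ = Sigᵀ * (Psi * Sigp)ᵀ := transpose_mul _ _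
    _ = Sigᵀ * (Sigpᵀ * Psiᵀ) := by rw [transpose_mul]
    _ = Sig * (Sigp * Psi) := by rw [hSs, hSps, hPs]
  have r1 : LinearMap.range Psi.mulVecLin ≤ LinearMap.range Sig.mulVecLin :=
    range_le_of_factor f1'
  -- range Sig ≤ range Psi
  have k2 : ∀ x, Psip *ᵥ x = 0 → Sigp *ᵥ x = 0 := ker_incl hSigpPSD hgep
  have f2 : Sigp = Sigp * Psi * Psip := factor k2 (mp_symm hPsip).1
  have f2' : Sigp = Psip * (Psi * Sigp) := by
    calc Sigp = Sigpᵀ := hSps.symm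
    _ = (Sigp * Psi * Psip)ᵀ := by rw [← f2]
    _ = Psipᵀ * (Sigp * Psi)ᵀ := transpose_mul _ _
    _ = Psipᵀ * (Psiᵀ * Sigpᵀ) := by rw [transpose_mul]
    _ = Psip * (Psi * Sigp) := by rw [hSps, hPps, hPs]
  have r2a : LinearMap.range Sig.mulVecLin ≤ LinearMap.range Sigp.mulVecLin :=
    range_pinv hSs hSps hSigp
  have r2b : LinearMap.range Sigp.mulVecLin ≤ LinearMap.range Psip.mulVecLin :=
    range_le_of_factor f2'
  have r2c : LinearMap.range Psip.mulVecLin ≤ LinearMap.range Psi.mulVecLin :=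
    range_pinv hPps hPs (mp_symm hPsip)
  have rmain : LinearMap.range Sig.mulVecLin = LinearMap.range Psi.mulVecLin :=
    le_antisymm (r2a.trans (r2b.trans r2c)) r1
  -- range of sqrt equals range of the matrix
  have sqrt_range : ∀ (A : Matrix (Fin n) (Fin n) ℝ) (hA : A.PosSemidef),
      LinearMap.range hA.sqrt.mulVecLin = LinearMap.range A.mulVecLin := by
    intro A hA
    have hmul : A = hA.sqrt * hA.sqrt := hA.sqrt_mul_self.symm
    have hle : LinearMap.range A.mulVecLin ≤ LinearMap.range hA.sqrt.mulVecLin :=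
      range_le_of_factor hmul
    have hs : hA.sqrt.PosSemidef := hA.posSemidef_sqrt
    have hst : hA.sqrtᵀ = hA.sqrt := by
      have := hs.1; rwa [IsHermitian, conjTranspose_eq_transpose_of_trivial] at this
    have hrank : A.rank = hA.sqrt.rank := by
      have := rank_transpose_mul_self hA.sqrt
      rwa [hst, hA.sqrt_mul_self] at this
    have hfr : Module.finrank ℝ (LinearMap.range hA.sqrt.mulVecLin)
        ≤ Module.finrank ℝ (LinearMap.range A.mulVecLin) := by
      simpa only [Matrix.rank] using hrank.ge
    exact (Submodule.eq_of_le_of_finrank_le hle hfr).symm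
  rw [sqrt_range Sig hSig, sqrt_range Psi hPsi, rmain]
end

section
/- Let h(X) = AXAᵀ + Q for A ∈ ℝ^{n×n}, Q ⪰ 0, and let P̄ ⪰ 0 be a fixed point or any PSD matrix with h(P̄) ⪰ P̄. Then for every τ ≥ n, rank(h^τ(P̄) − P̄) = rank(h^n(P̄) − P̄). -/
open Matrix Finset

/-- Cayley–Hamilton: `B ^ n` is a combination of lower powers. -/
lemma aux_pow_card_eq {n : ℕ} (B : Matrix (Fin n) (Fin n) ℝ) :
    B ^ n = -∑ i ∈ Finset.range n, B.charpoly.coeff i • B ^ i := by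
  have h := B.aeval_self_charpoly
  rw [Polynomial.aeval_eq_sum_range] at h
  have hdeg : B.charpoly.natDegree = n := by
    rw [B.charpoly_natDegree_eq_dim, Fintype.card_fin]
  have hc : B.charpoly.coeff n = 1 := by
    have := B.charpoly_monic.coeff_natDegree
    rwa [hdeg] at this
  rw [hdeg, Finset.sum_range_succ, hc, one_smul] at h
  linear_combination (norm := (push_cast; abel)) h

lemma aux_sum_mulVec {n : ℕ} {ι : Type*} (s : Finset ι)
    (f : ι → Matrix (Fin n) (Fin n) ℝ) (x : Fin n → ℝ) :
    (∑ i ∈ s, f i) *ᵥ x = ∑ i ∈ s, f i *ᵥ x := by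
  induction s using Finset.cons_induction with
  | empty => simp
  | cons a s ha ih => simp [Finset.sum_cons, add_mulVec, ih]

/-- If `Σ' *ᵥ (B^i *ᵥ x) = 0` for `i < n`, then for all `i`. -/
lemma aux_ext_all {n : ℕ} {B S : Matrix (Fin n) (Fin n) ℝ} {x : Fin n → ℝ}
    (hx : ∀ i < n, S *ᵥ (B ^ i *ᵥ x) = 0) : ∀ m, S *ᵥ (B ^ m *ᵥ x) = 0 := by
  intro m
  induction m using Nat.strong_induction_on with
  | _ m ih =>
    by_cases hm : m < n
    · exact hx m hm
    · push_neg at hm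
      have hsplit : B ^ m = B ^ (m - n) * B ^ n := by
        rw [← pow_add]; congr 1; omega
      rw [hsplit, aux_pow_card_eq, mul_neg, Finset.mul_sum]
      simp only [mul_smul_comm, ← pow_add]
      rw [neg_mulVec, aux_sum_mulVec, mulVec_neg, neg_eq_zero, ← mulVecLin_apply,
        map_sum]
      apply Finset.sum_eq_zero
      intro i hi
      rw [smul_mulVec, _root_.map_smul, mulVecLin_apply,
        ih (m - n + i) (by simp only [Finset.mem_range] at hi; omega), smul_zero]

lemma aux_dot_sum {n : ℕ} {ι : Type*} (s : Finset ι) (x : Fin n → ℝ)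
    (v : ι → Fin n → ℝ) : x ⬝ᵥ (∑ i ∈ s, v i) = ∑ i ∈ s, x ⬝ᵥ v i := by
  induction s using Finset.cons_induction with
  | empty => simp
  | cons a s ha ih => simp [Finset.sum_cons, dotProduct_add, ih]

/-- Kernel characterization for the PSD sum. -/
lemma aux_ker_char {n : ℕ} {A S : Matrix (Fin n) (Fin n) ℝ} (hS : S.PosSemidef)
    (k : ℕ) (x : Fin n → ℝ) :
    (∑ i ∈ Finset.range k, A ^ i * S * (Aᵀ) ^ i) *ᵥ x = 0 ↔
      ∀ i < k, S *ᵥ ((Aᵀ) ^ i *ᵥ x) = 0 := by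
  have hterm : ∀ i, (A ^ i * S * (Aᵀ) ^ i).PosSemidef := by
    intro i
    have := hS.mul_mul_conjTranspose_same (A ^ i)
    rwa [conjTranspose_eq_transpose_of_trivial, transpose_pow] at this
  have hsum : (∑ i ∈ Finset.range k, A ^ i * S * (Aᵀ) ^ i).PosSemidef :=
    Finset.sum_induction _ _ (fun _ _ ha hb => ha.add hb)
      Matrix.PosSemidef.zero (fun i _ => hterm i)
  rw [← hsum.dotProduct_mulVec_zero_iff x, star_trivial]
  rw [aux_sum_mulVec, aux_dot_sum]
  rw [Finset.sum_eq_zero_iff_of_nonneg (fun i _ => by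
    simpa [star_trivial] using (hterm i).dotProduct_mulVec_nonneg x)]
  have hrewrite : ∀ i, x ⬝ᵥ (A ^ i * S * (Aᵀ) ^ i) *ᵥ x
      = ((Aᵀ) ^ i *ᵥ x) ⬝ᵥ S *ᵥ ((Aᵀ) ^ i *ᵥ x) := by
    intro i
    rw [← mulVec_mulVec, ← mulVec_mulVec, dotProduct_mulVec x (A ^ i),
      ← mulVec_transpose, transpose_pow]
  constructor
  · intro H i hi
    have h1 := H i (Finset.mem_range.mpr hi)
    rw [hrewrite] at h1
    exact (hS.dotProduct_mulVec_zero_iff ((Aᵀ) ^ i *ᵥ x)).mp (by rwa [star_trivial])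
  · intro H i hi
    rw [hrewrite, H i (Finset.mem_range.mp hi)]
    simp

/-- Sum representation of `h^[k] Pbar - Pbar`. -/
lemma aux_rep {n : ℕ} (A Q Pbar : Matrix (Fin n) (Fin n) ℝ)
    (h : Matrix (Fin n) (Fin n) ℝ → Matrix (Fin n) (Fin n) ℝ)
    (hh : h = fun X => A * X * Aᵀ + Q) (k : ℕ) :
    h^[k] Pbar - Pbar = ∑ i ∈ Finset.range k, A ^ i * (h Pbar - Pbar) * (Aᵀ) ^ i := by
  subst hh
  induction k with
  | zero => simp
  | succ k ih =>
    rw [Function.iterate_succ_apply', Finset.sum_range_succ']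
    have hk := sub_eq_iff_eq_add.mp ih
    simp only [] at hk ⊢
    rw [hk]
    simp only [pow_zero, one_mul, mul_one]
    rw [Matrix.mul_add, Matrix.add_mul, Finset.mul_sum, Finset.sum_mul]
    have : ∀ i, A * (A ^ i * ((A * Pbar * Aᵀ + Q) - Pbar) * (Aᵀ) ^ i) * Aᵀ
        = A ^ (i + 1) * ((A * Pbar * Aᵀ + Q) - Pbar) * (Aᵀ) ^ (i + 1) := by
      intro i
      rw [pow_succ', pow_succ]
      noncomm_ring
    simp only [this]
    abel

/-- For the Lyapunov-type map `h(X) = A X Aᵀ + Q` with `Q ⪰ 0` and `h(P̄) ⪰ P̄ ⪰ 0`: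
for every `τ ≥ n`, `rank(h^τ(P̄) − P̄) = rank(h^n(P̄) − P̄)`. -/
theorem stmt_13 {n : ℕ} (A Q Pbar : Matrix (Fin n) (Fin n) ℝ)
    (hQ : Q.PosSemidef) (hP : Pbar.PosSemidef)
    (h : Matrix (Fin n) (Fin n) ℝ → Matrix (Fin n) (Fin n) ℝ)
    (hh : h = fun X => A * X * Aᵀ + Q)
    (hmono : (h Pbar - Pbar).PosSemidef)
    (τ : ℕ) (hτ : n ≤ τ) :
    (h^[τ] Pbar - Pbar).rank = (h^[n] Pbar - Pbar).rank := by
  have hker : ∀ x, (h^[τ] Pbar - Pbar) *ᵥ x = 0 ↔ (h^[n] Pbar - Pbar) *ᵥ x = 0 := by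
    intro x
    rw [aux_rep A Q Pbar h hh, aux_rep A Q Pbar h hh,
      aux_ker_char hmono, aux_ker_char hmono]
    constructor
    · intro H i hi; exact H i (lt_of_lt_of_le hi hτ)
    · intro H i _hi; exact aux_ext_all (fun j hj => H j hj) i
  have hkereq : LinearMap.ker (h^[τ] Pbar - Pbar).mulVecLin
      = LinearMap.ker (h^[n] Pbar - Pbar).mulVecLin := by
    ext x
    simp only [LinearMap.mem_ker, mulVecLin_apply]
    exact hker x
  have h1 := (h^[τ] Pbar - Pbar).mulVecLin.finrank_range_add_finrank_ker
  have h2 := (h^[n] Pbar - Pbar).mulVecLin.finrank_range_add_finrank_ker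
  rw [hkereq] at h1
  rw [Matrix.rank, Matrix.rank]
  omega
end
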